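/- Let J ≥ 1 and let K ⊂ X = {0,…,J}^{ℤ₋} be a subshift. The following three conditions are equivalent: (i) K is of finite type; (ii) the set K_e^c of exit points of K is closed; (iii) K ∩ closure(K_e^c) = ∅. -/

import Mathlib

open Set Topology Filter

def shiftX {J : ℕ} (ξ : ℕ → Fin (J+1)) : ℕ → Fin (J+1) := fun n => ξ (n+1)

def consX {J : ℕ} (a : Fin (J+1)) (ξ : ℕ → Fin (J+1)) : ℕ → Fin (J+1) :=
  fun n => match n with
  | 0 => a
  | m+1 => ξ m

def starX {J : ℕ} (j : Fin (J+1)) (ξ : ℕ → Fin (J+1)) : ℕ → Fin (J+1) :=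
  fun n => match n with
  | 0 => ξ 0 + j
  | m+1 => ξ (m+1)

/-- The set of exit points of `E`: points outside `E` whose shift lies in `E`. -/
def exitX {J : ℕ} (E : Set (ℕ → Fin (J+1))) : Set (ℕ → Fin (J+1)) :=
  {ξ | ξ ∉ E ∧ shiftX ξ ∈ E}

/-- A subshift: a nonempty, closed, proper, shift-invariant subset. -/
def IsSubshift {J : ℕ} (K : Set (ℕ → Fin (J+1))) : Prop :=
  K.Nonempty ∧ IsClosed K ∧ K ≠ Set.univ ∧ K = shiftX '' K

/-- The word `(w₁,…,w_m)` occurs in `ξ` if for some `i ≥ 0` the consecutive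
coordinates `(ξ(i+m−1),…,ξ(i))` equal `(w₁,…,w_m)`. -/
def OccursX {J : ℕ} (w : List (Fin (J+1))) (ξ : ℕ → Fin (J+1)) : Prop :=
  ∃ i : ℕ, ∀ k, k < w.length → ξ (i + k) = w.reverse.getD k 0

/-- A subshift of finite type: defined by a finite nonempty set of forbidden words. -/
def IsFiniteType {J : ℕ} (K : Set (ℕ → Fin (J+1))) : Prop :=
  ∃ F : Finset (List (Fin (J+1))), F.Nonempty ∧ K = {ξ | ∀ w ∈ F, ¬ OccursX w ξ}


lemma shiftX_continuous {J : ℕ} : Continuous (shiftX (J := J)) :=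
  continuous_pi fun n => continuous_apply (n+1)

lemma shiftX_iterate_apply {J : ℕ} (j : ℕ) (ξ : ℕ → Fin (J+1)) (n : ℕ) :
    (shiftX^[j] ξ) n = ξ (n + j) := by
  induction j generalizing ξ with
  | zero => rfl
  | succ j ih =>
    rw [Function.iterate_succ_apply, ih]
    rfl

lemma isClosed_agree {J : ℕ} (m : ℕ) (ξ : ℕ → Fin (J+1)) :
    IsClosed {η : ℕ → Fin (J+1) | ∀ k < m, η k = ξ k} := by
  have h : {η : ℕ → Fin (J+1) | ∀ k < m, η k = ξ k}
      = ⋂ k ∈ Set.Iio m, (fun η : ℕ → Fin (J+1) => η k) ⁻¹' {ξ k} := by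
    ext η; simp
  rw [h]
  exact isClosed_biInter fun k _ => isClosed_singleton.preimage (continuous_apply k)

lemma isOpen_agree {J : ℕ} (m : ℕ) (ξ : ℕ → Fin (J+1)) :
    IsOpen {η : ℕ → Fin (J+1) | ∀ k < m, η k = ξ k} := by
  have h : {η : ℕ → Fin (J+1) | ∀ k < m, η k = ξ k}
      = ⋂ k ∈ Set.Iio m, (fun η : ℕ → Fin (J+1) => η k) ⁻¹' {ξ k} := by
    ext η; simp
  rw [h]
  exact (Set.finite_Iio m).isOpen_biInter fun k _ =>
    (isOpen_discrete _).preimage (continuous_apply k)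

lemma isClosed_exists_agree {J : ℕ} (K : Set (ℕ → Fin (J+1))) (N : ℕ) :
    IsClosed {η : ℕ → Fin (J+1) | ∃ ξ ∈ K, ∀ k < N, ξ k = η k} := by
  have h : {η : ℕ → Fin (J+1) | ∃ ξ ∈ K, ∀ k < N, ξ k = η k}
      = (fun (η : ℕ → Fin (J+1)) (k : Fin N) => η k) ⁻¹'
        ((fun (ξ : ℕ → Fin (J+1)) (k : Fin N) => ξ k) '' K) := by
    ext η
    constructor
    · rintro ⟨ξ, hξ, hag⟩
      exact ⟨ξ, hξ, funext fun k => hag k k.2⟩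
    · rintro ⟨ξ, hξ, heq⟩
      exact ⟨ξ, hξ, fun k hk => congrFun heq ⟨k, hk⟩⟩
  rw [h]
  refine (isClosed_discrete _).preimage (continuous_pi fun k : Fin N => ?_)
  exact continuous_apply (A := fun _ : ℕ => Fin (J+1)) (k : ℕ)

lemma mem_of_approx {J : ℕ} {K : Set (ℕ → Fin (J+1))} (hKc : IsClosed K)
    {η : ℕ → Fin (J+1)} (h : ∀ m, ∃ ζ ∈ K, ∀ k < m, ζ k = η k) : η ∈ K := by
  choose ζ hζK hζ using h
  have ht : Tendsto ζ atTop (nhds η) := by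
    refine (tendsto_pi_nhds (A := fun _ : ℕ => Fin (J+1))).mpr fun n => ?_
    rw [nhds_discrete, Filter.tendsto_pure]
    filter_upwards [Filter.eventually_ge_atTop (n+1)] with m hm
    exact hζ m n (by omega)
  exact hKc.mem_of_tendsto ht (Filter.Eventually.of_forall hζK)

/-- Separation: a compact set disjoint from a closed set is uniformly separated. -/
lemma exists_sep {J : ℕ} {K C : Set (ℕ → Fin (J+1))} (hKc : IsClosed K)
    (hC : IsCompact C) (hdisj : C ∩ K = ∅) :
    ∃ N, ∀ η ∈ C, ¬ ∃ ξ ∈ K, ∀ k < N, ξ k = η k := by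
  set W : ℕ → Set (ℕ → Fin (J+1)) :=
    fun N => {η | ∃ ξ ∈ K, ∀ k < N, ξ k = η k} with hW
  have hWc : ∀ N, IsClosed (W N) := fun N => isClosed_exists_agree K N
  have hempty : C ∩ ⋂ N, W N = ∅ := by
    rw [Set.eq_empty_iff_forall_notMem]
    rintro η ⟨hηC, hηW⟩
    have hηK : η ∈ K := by
      apply mem_of_approx hKc
      intro m
      exact Set.mem_iInter.1 hηW m
    exact Set.eq_empty_iff_forall_notMem.1 hdisj η ⟨hηC, hηK⟩
  obtain ⟨t, ht⟩ := hC.elim_finite_subfamily_closed W hWc hempty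
  refine ⟨t.sup id, fun η hηC hex => ?_⟩
  have : η ∈ C ∩ ⋂ N ∈ t, W N := by
    refine ⟨hηC, Set.mem_iInter₂.2 fun N hN => ?_⟩
    obtain ⟨ξ, hξK, hag⟩ := hex
    exact ⟨ξ, hξK, fun k hk => hag k (lt_of_lt_of_le hk (Finset.le_sup (f := id) hN))⟩
  rw [ht] at this
  exact this

lemma iterate_mem {J : ℕ} {K : Set (ℕ → Fin (J+1))}
    (hinv : ∀ ζ ∈ K, shiftX ζ ∈ K) (j : ℕ) {ζ : ℕ → Fin (J+1)} (hζ : ζ ∈ K) :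
    shiftX^[j] ζ ∈ K := by
  induction j with
  | zero => exact hζ
  | succ j ih => rw [Function.iterate_succ_apply']; exact hinv _ ih

lemma prepend {J N₀ : ℕ} {K : Set (ℕ → Fin (J+1))}
    (hinv : ∀ ζ ∈ K, shiftX ζ ∈ K)
    (glue : ∀ η, shiftX η ∈ K → (∃ ξ ∈ K, ∀ k < N₀, ξ k = η k) → η ∈ K) :
    ∀ (j : ℕ) (ρ : ℕ → Fin (J+1)), shiftX^[j] ρ ∈ K →
      (∃ ζ ∈ K, ∀ k < j + N₀, ζ k = ρ k) → ρ ∈ K := by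
  intro j
  induction j with
  | zero => intro ρ h _; exact h
  | succ j ih =>
    rintro ρ h ⟨ζ, hζK, hag⟩
    have hj : shiftX^[j] ρ ∈ K := by
      apply glue
      · rw [← Function.iterate_succ_apply' shiftX j ρ]
        exact h
      · refine ⟨shiftX^[j] ζ, iterate_mem hinv j hζK, fun k hk => ?_⟩
        rw [shiftX_iterate_apply, shiftX_iterate_apply]
        exact hag (k + j) (by omega)
    exact ih ρ hj ⟨ζ, hζK, fun k hk => hag k (by omega)⟩

/-- The key gluing construction: if every length-`L` block of `η` occurs (at the
origin) in `K`, with `L ≥ N₀ + 1`, then `η ∈ K`. -/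
lemma mem_of_blocks {J N₀ L : ℕ} {K : Set (ℕ → Fin (J+1))}
    (hKc : IsClosed K) (hinv : ∀ ζ ∈ K, shiftX ζ ∈ K) (hL : N₀ + 1 ≤ L)
    (glue : ∀ η, shiftX η ∈ K → (∃ ξ ∈ K, ∀ k < N₀, ξ k = η k) → η ∈ K)
    {η : ℕ → Fin (J+1)}
    (hblocks : ∀ i, ∃ ζ ∈ K, ∀ k < L, ζ k = η (i + k)) : η ∈ K := by
  have Q : ∀ t, ∃ ζ ∈ K, ∀ k < L + t, ζ k = η k := by
    intro t
    induction t with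
    | zero =>
      obtain ⟨ζ, hζK, hζ⟩ := hblocks 0
      exact ⟨ζ, hζK, fun k hk => by simpa using hζ k (by omega)⟩
    | succ t ih =>
      obtain ⟨ζ, hζK, hζ⟩ := ih
      obtain ⟨θ, hθK, hθ⟩ := hblocks (t + 1)
      set ρ : ℕ → Fin (J+1) := fun n => if n ≤ L + t then η n else θ (n - (t+1)) with hρ
      have hρη : ∀ n ≤ L + t, ρ n = η n := fun n hn => by simp [hρ, hn]
      have hshift : shiftX^[t+1] ρ = θ := by
        funext n
        rw [shiftX_iterate_apply]
        by_cases hn : n + (t+1) ≤ L + t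
        · have hnL : n < L := by omega
          rw [hρη _ hn]
          have := hθ n hnL
          rw [show t + 1 + n = n + (t + 1) from by omega] at this
          exact this.symm
        · simp only [hρ, if_neg hn]
          congr 1
          omega
      have hρK : ρ ∈ K := by
        apply prepend hinv glue (t+1) ρ (by rw [hshift]; exact hθK)
        refine ⟨ζ, hζK, fun k hk => ?_⟩
        have hk' : k < L + t := by omega
        rw [hρη _ (by omega)]
        exact hζ k hk'
      refine ⟨ρ, hρK, fun k hk => hρη _ (by omega)⟩
  apply mem_of_approx hKc
  intro m
  obtain ⟨ζ, hζK, hζ⟩ := Q m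
  exact ⟨ζ, hζK, fun k hk => hζ k (by omega)⟩

/-- For a subshift `K`, the following are equivalent:
(i) `K` is of finite type; (ii) `K_e^c` is closed; (iii) `K ∩ closure K_e^c = ∅`. -/
theorem finiteType_tfae {J : ℕ} (hJ : 1 ≤ J)
    (K : Set (ℕ → Fin (J+1))) (hK : IsSubshift K) :
    List.TFAE [IsFiniteType K,
      IsClosed (exitX K),
      K ∩ closure (exitX K) = ∅] := by
  obtain ⟨hne, hcl, hproper, hinv⟩ := hK
  have hshift : ∀ ζ ∈ K, shiftX ζ ∈ K := fun ζ h => by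
    rw [hinv]; exact ⟨ζ, h, rfl⟩
  tfae_have 1 → 3 := by
    rintro ⟨F, hFne, hKF⟩
    rw [Set.eq_empty_iff_forall_notMem]
    rintro ξ ⟨hξK, hξcl⟩
    set M := F.sup List.length with hM
    obtain ⟨η, hηU, hηn, hηs⟩ :=
      mem_closure_iff.1 hξcl _ (isOpen_agree M ξ) (fun k _ => rfl)
    have hηocc : ∃ w ∈ F, OccursX w η := by
      by_contra hc
      push_neg at hc
      exact hηn (by rw [hKF]; exact fun w hw => hc w hw)
    obtain ⟨w, hwF, i, hi⟩ := hηocc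
    match i with
    | 0 =>
      rw [hKF] at hξK
      refine hξK w hwF ⟨0, fun k hk => ?_⟩
      have hk' := hi k hk
      rw [Nat.zero_add] at hk' ⊢
      rw [← hηU k (lt_of_lt_of_le hk (Finset.le_sup (f := List.length) hwF))]
      exact hk'
    | (j+1) =>
      rw [hKF] at hηs
      refine hηs w hwF ⟨j, fun k hk => ?_⟩
      show η (j + k + 1) = _
      rw [show j + k + 1 = (j + 1) + k from by omega]
      exact hi k hk
  tfae_have 3 → 2 := by
    intro h3
    have hsub : closure (exitX K) ⊆ exitX K := by
      intro η hη
      have hs : shiftX η ∈ K :=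
        closure_minimal (fun ζ hζ => hζ.2) (hcl.preimage shiftX_continuous) hη
      have hn : η ∉ K := fun hηK => Set.eq_empty_iff_forall_notMem.1 h3 η ⟨hηK, hη⟩
      exact ⟨hn, hs⟩
    rw [Set.Subset.antisymm subset_closure hsub]
    exact isClosed_closure
  tfae_have 2 → 3 := by
    intro h2
    rw [h2.closure_eq, Set.eq_empty_iff_forall_notMem]
    rintro ξ ⟨hξ1, hξ2⟩
    exact hξ2.1 hξ1
  tfae_have 3 → 1 := by
    intro h3
    obtain ⟨ξ0, hξ0⟩ : ∃ ξ0, ξ0 ∉ K := by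
      by_contra h
      push_neg at h
      exact hproper (Set.eq_univ_of_forall h)
    obtain ⟨m, hm⟩ := exists_sep (C := {ξ0}) hcl isCompact_singleton (by
      rw [Set.eq_empty_iff_forall_notMem]
      rintro η ⟨hη1, hη2⟩
      rw [Set.mem_singleton_iff] at hη1
      subst hη1
      exact hξ0 hη2)
    have hm' : ¬ ∃ ξ ∈ K, ∀ k < m, ξ k = ξ0 k := hm ξ0 rfl
    obtain ⟨N₀, hN₀⟩ := exists_sep hcl isClosed_closure.isCompact
      (by rw [Set.inter_comm]; exact h3)
    have glue : ∀ η, shiftX η ∈ K → (∃ ξ ∈ K, ∀ k < N₀, ξ k = η k) → η ∈ K := by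
      intro η hs hex
      by_contra hn
      exact hN₀ η (subset_closure ⟨hn, hs⟩) hex
    set L := max (N₀ + 1) m with hLdef
    have hLN : N₀ + 1 ≤ L := le_max_left _ _
    have hLm : m ≤ L := le_max_right _ _
    have hfin : {w : List (Fin (J+1)) | w.length = L ∧
        ¬ ∃ ζ ∈ K, ∀ k < L, ζ k = w.reverse.getD k 0}.Finite :=
      (List.finite_length_eq _ L).subset fun w hw => hw.1
    refine ⟨hfin.toFinset, ⟨(List.ofFn fun k : Fin L => ξ0 (k : ℕ)).reverse, ?_⟩, ?_⟩
    · rw [Set.Finite.mem_toFinset]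
      refine ⟨by simp, ?_⟩
      rintro ⟨ζ, hζK, hζ⟩
      apply hm'
      refine ⟨ζ, hζK, fun k hk => ?_⟩
      have h1 := hζ k (by omega)
      rw [List.reverse_reverse,
        List.getD_eq_getElem _ _ (by simpa using by omega : k < (List.ofFn fun k : Fin L => ξ0 (k : ℕ)).length),
        List.getElem_ofFn] at h1
      exact h1
    · ext ξ
      simp only [Set.mem_setOf_eq, Set.Finite.mem_toFinset]
      constructor
      · rintro hξK w ⟨hwlen, hwforb⟩ ⟨i, hi⟩
        apply hwforb
        refine ⟨shiftX^[i] ξ, iterate_mem hshift i hξK, fun k hk => ?_⟩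
        rw [shiftX_iterate_apply, Nat.add_comm k i]
        exact hi k (by rw [hwlen]; exact hk)
      · intro hforb
        apply mem_of_blocks hcl hshift hLN glue
        intro i
        by_contra hblk
        set p : List (Fin (J+1)) := List.ofFn fun k : Fin L => ξ (i + (k : ℕ)) with hp
        have hplen : p.length = L := by simp [hp]
        have hpget : ∀ k, k < L → p.getD k 0 = ξ (i + k) := by
          intro k hk
          rw [List.getD_eq_getElem _ _ (by omega : k < p.length)]
          exact List.getElem_ofFn _
        refine hforb p.reverse ⟨by simp [hplen], ?_⟩ ⟨i, fun k hk => ?_⟩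
        · rintro ⟨ζ, hζK, hζ⟩
          apply hblk
          refine ⟨ζ, hζK, fun k hk => ?_⟩
          rw [hζ k hk, List.reverse_reverse, hpget k hk]
        · have hk' : k < L := by simpa [hplen] using hk
          rw [List.reverse_reverse, hpget k hk']
  tfae_finish
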